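/- Let W be a word of length x over an ordered alphabet, and let d ≥ 1. Then either the first ⌊x/d⌋ suffixes of W (the suffixes starting at positions 1,…,⌊x/d⌋) are pairwise comparable in the lexicographic order (neither is a prefix of the other), or W contains a subword of the form u^d for some nonempty word u. -/

import Mathlib

variable {α : Type*} [LinearOrder α]

/-- `u` repeated `d` times. -/
def wpow (u : List α) (d : ℕ) : List α := (List.replicate d u).flatten

/-- Two words are comparable if neither is a prefix of the other. -/
def WComparable (u v : List α) : Prop := ¬ u <+: v ∧ ¬ v <+: u

lemma wpow_succ (u : List α) (n : ℕ) : wpow u (n + 1) = u ++ wpow u n := by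
  simp [wpow, List.replicate_succ]

/-- Periodicity lemma: if dropping `p` letters from `V` yields a prefix of `V`,
then the first `n*p` letters of `V` form the `n`-th power of the first `p` letters. -/
lemma take_eq_wpow (V : List α) (p n : ℕ)
    (h : V.drop p <+: V) (hn : n * p ≤ V.length) :
    V.take (n * p) = wpow (V.take p) n := by
  induction n with
  | zero => simp [wpow]
  | succ n ih =>
      have hlen : (n + 1) * p ≤ V.length := hn
      have hnp : n * p ≤ V.length - p := by
        have := hlen
        rw [Nat.succ_mul] at this
        omega
      have h1 : (n + 1) * p = p + n * p := by ring
      rw [h1, List.take_add]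
      obtain ⟨t, ht⟩ := h
      have hdroptake : (V.drop p).take (n * p) = V.take (n * p) := by
        conv_rhs => rw [← ht]
        rw [List.take_append_of_le_length]
        simpa using hnp
      rw [hdroptake, ih (by omega), wpow_succ]

lemma aux_case (W : List α) (d i j : ℕ) (hd : 1 ≤ d) (hij : i < j)
    (hj : j < W.length / d) (hpre : W.drop j <+: W.drop i) :
    ∃ u : List α, u ≠ [] ∧ wpow u d <:+: W := by
  set x := W.length with hx
  have hjd : (j + 1) * d ≤ x := by
    have h0 : j + 1 ≤ x / d := hj
    exact (Nat.le_div_iff_mul_le (by omega : 0 < d)).mp h0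
  set p := j - i with hp
  set V := W.drop i with hV
  have hVlen : V.length = x - i := by simp [hV, hx]
  have hdrop : V.drop p = W.drop j := by
    rw [hV, List.drop_drop]
    congr 1
    omega
  have hdp : d * p ≤ V.length := by
    have h1 : d * p + d * i = d * j := by
      rw [← Nat.mul_add]
      congr 1
      omega
    have h2 : d * j + d ≤ x := by
      have : (j + 1) * d = d * j + d := by ring
      omega
    have h3 : i ≤ d * i := Nat.le_mul_of_pos_left i (by omega)
    rw [hVlen]
    omega
  have hkey : V.take (d * p) = wpow (V.take p) d := by
    apply take_eq_wpow
    · rw [hdrop]; exact hpre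
    · omega
  refine ⟨V.take p, ?_, ?_⟩
  · have hplen : 0 < p := by omega
    have : 0 < (V.take p).length := by
      rw [List.length_take]
      have : p ≤ V.length := le_trans (Nat.le_mul_of_pos_left p (by omega)) hdp
      omega
    exact List.ne_nil_of_length_pos this
  · rw [← hkey]
    exact List.IsInfix.trans (V.take_prefix (d * p)).isInfix (W.drop_suffix i).isInfix

theorem stmt0 (W : List α) (d : ℕ) (hd : 1 ≤ d) :
    (∀ i j : ℕ, i < W.length / d → j < W.length / d → i ≠ j →
      WComparable (W.drop i) (W.drop j)) ∨
    ∃ u : List α, u ≠ [] ∧ wpow u d <:+: W := by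
  by_cases h : ∀ i j : ℕ, i < W.length / d → j < W.length / d → i ≠ j →
      WComparable (W.drop i) (W.drop j)
  · exact Or.inl h
  · right
    push_neg at h
    obtain ⟨i, j, hi, hj, hij, hnc⟩ := h
    rw [WComparable, not_and_or, not_not, not_not] at hnc
    have hjx : ∀ k : ℕ, k < W.length / d → k < W.length := fun k hk => by
      have h0 : k + 1 ≤ W.length / d := hk
      have := (Nat.le_div_iff_mul_le (by omega : 0 < d)).mp h0
      nlinarith
    rcases hnc with hpre | hpre
    · -- W.drop i <+: W.drop j
      rcases lt_or_gt_of_ne hij with hlt | hgt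
      · -- i < j : length contradiction
        exfalso
        have hl := hpre.length_le
        simp only [List.length_drop] at hl
        have := hjx j hj
        omega
      · exact aux_case W d j i hd hgt hi hpre
    · rcases lt_or_gt_of_ne hij with hlt | hgt
      · exact aux_case W d i j hd hlt hj hpre
      · exfalso
        have hl := hpre.length_le
        simp only [List.length_drop] at hl
        have := hjx i hi
        omega
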